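/- For the surface pencil X(s,t) = γ(s) + A(t)V₂(s) + B(t)V₄(s), the Gaussian curvature K = (c₁₁¹c₂₂¹ - (c₁₂¹)² + c₁₁²c₂₂² - (c₁₂²)²)/(EG - F²) equals [(a²+b²)(A'B'' - B'A''){A'bκ₃ - B'(κ₁a - κ₂b)} - ((A')²+(B')²)(ab_t - ba_t)²] / g², where g = (a²+b²)((A')²+(B')²). -/

import Mathlib

/-- The Gaussian curvature of the surface pencil, computed from the
second fundamental form coefficients, equals the explicit formula (B3). -/
theorem surface_pencil_gaussian_curvature
    (a b A' B' A'' B'' κ₁ κ₂ κ₃ a_s b_s a_t b_t E F G g K : ℝ)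
    (hE : E = a ^ 2 + b ^ 2) (hEpos : 0 < E)
    (hF : F = 0)
    (hG : G = A' ^ 2 + B' ^ 2) (hGpos : 0 < G)
    (hg : g = E * G)
    (c111 c121 c221 c112 c122 c222 : ℝ)
    (hc111 : c111 = (A' * b * κ₃ - B' * (κ₁ * a - κ₂ * b)) / Real.sqrt G)
    (hc121 : c121 = 0)
    (hc221 : c221 = (A' * B'' - B' * A'') / Real.sqrt G)
    (hc112 : c112 = (a * b_s - b * a_s) / Real.sqrt E)
    (hc122 : c122 = (a * b_t - b * a_t) / Real.sqrt E)
    (hc222 : c222 = 0)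
    (hK : K = (c111 * c221 - c121 ^ 2 + c112 * c222 - c122 ^ 2) / (E * G - F ^ 2)) :
    K = ((a ^ 2 + b ^ 2) * (A' * B'' - B' * A'') *
          (A' * b * κ₃ - B' * (κ₁ * a - κ₂ * b)) -
        (A' ^ 2 + B' ^ 2) * (a * b_t - b * a_t) ^ 2) / g ^ 2 := by
  have hEs : Real.sqrt E ^ 2 = E := Real.sq_sqrt hEpos.le
  have hGs : Real.sqrt G ^ 2 = G := Real.sq_sqrt hGpos.le
  have hEs0 : Real.sqrt E ≠ 0 := by positivity
  have hGs0 : Real.sqrt G ≠ 0 := by positivity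
  have hE0 : E ≠ 0 := hEpos.ne'
  have hG0 : G ≠ 0 := hGpos.ne'
  subst hK hc111 hc121 hc221 hc112 hc122 hc222 hF hg
  rw [← hE, ← hG]
  field_simp
  ring_nf
  rw [hEs, hGs]
  ring
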